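/- Let n ≥ 3 be an integer. The constant function v ≡ ((n−2)/n)^((n−2)/4) satisfies the Delaunay ODE and H(v(t), v'(t)) = −((n−2)/2)·((n−2)/n)^(n/2) for all t ∈ ℝ; moreover, every bounded, twice continuously differentiable function v : ℝ → ℝ with v(t) > 0 for all t that satisfies the Delaunay ODE and H(v(t), v'(t)) = −((n−2)/2)·((n−2)/n)^(n/2) for all t is identically equal to ((n−2)/n)^((n−2)/4). -/

import Mathlib

lemma bern_min {q u u₀ : ℝ} (hq : 1 < q) (hu : 0 < u) (hu0 : 0 < u₀)
    (hne : u ≠ u₀) (hcrit : q * u₀ ^ (q - 1) = 1) :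
    u₀ ^ q - u₀ < u ^ q - u := by
  set s := u / u₀ - 1 with hs
  have hs1 : 1 + s = u / u₀ := by ring
  have hdiv : 0 < u / u₀ := div_pos hu hu0
  have hsge : -1 ≤ s := by simp [hs]; linarith
  have hsne : s ≠ 0 := by
    intro h
    apply hne
    have : u / u₀ = 1 := by rw [← hs1, h]; ring
    field_simp at this
    linarith
  have hB := one_add_mul_self_lt_rpow_one_add hsge hsne hq
  rw [hs1, Real.div_rpow hu.le hu0.le] at hB
  have hu0q : 0 < u₀ ^ q := Real.rpow_pos_of_pos hu0 q
  have h2 : (1 + q * s) * u₀ ^ q < u ^ q := (lt_div_iff₀ hu0q).mp hB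
  have hq0 : u₀ ^ q = u₀ ^ (q - 1) * u₀ := by
    rw [← Real.rpow_add_one hu0.ne' (q - 1)]; ring_nf
  have e1 : q * s * u₀ ^ q = s * u₀ := by
    rw [hq0]; linear_combination (s * u₀) * hcrit
  have hu_eq : u = u₀ + s * u₀ := by field_simp [hs]; rw [hs1]; field_simp
  nlinarith [h2, e1, hu_eq]



/-- The Delaunay ODE: `v'' − ((n−2)²/4)·v + (n·(n−2)/4)·v^((n+2)/(n−2)) = 0`. -/
def DelaunayODE (n : ℕ) (v : ℝ → ℝ) : Prop :=
  ∀ t : ℝ, deriv (deriv v) t - (((n : ℝ) - 2) ^ 2 / 4) * v t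
    + ((n : ℝ) * ((n : ℝ) - 2) / 4) * v t ^ (((n : ℝ) + 2) / ((n : ℝ) - 2)) = 0

/-- The Hamiltonian energy of the Delaunay ODE:
`H(v, w) = w² − ((n−2)²/4)·v² + ((n−2)²/4)·v^(2n/(n−2))`. -/
noncomputable def delaunayH (n : ℕ) (v w : ℝ) : ℝ :=
  w ^ 2 - (((n : ℝ) - 2) ^ 2 / 4) * v ^ 2
    + (((n : ℝ) - 2) ^ 2 / 4) * v ^ (2 * (n : ℝ) / ((n : ℝ) - 2))

theorem stmt_6 (n : ℕ) (hn : 3 ≤ n) :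
    (DelaunayODE n (fun _ : ℝ => (((n : ℝ) - 2) / n) ^ (((n : ℝ) - 2) / 4)) ∧
      ∀ t : ℝ,
        delaunayH n ((fun _ : ℝ => (((n : ℝ) - 2) / n) ^ (((n : ℝ) - 2) / 4)) t)
          (deriv (fun _ : ℝ => (((n : ℝ) - 2) / n) ^ (((n : ℝ) - 2) / 4)) t)
          = -(((n : ℝ) - 2) / 2) * (((n : ℝ) - 2) / n) ^ ((n : ℝ) / 2)) ∧
    ∀ v : ℝ → ℝ, (∃ C : ℝ, ∀ t : ℝ, |v t| ≤ C) → ContDiff ℝ 2 v →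
      (∀ t : ℝ, 0 < v t) → DelaunayODE n v →
      (∀ t : ℝ, delaunayH n (v t) (deriv v t)
        = -(((n : ℝ) - 2) / 2) * (((n : ℝ) - 2) / n) ^ ((n : ℝ) / 2)) →
      ∀ t : ℝ, v t = (((n : ℝ) - 2) / n) ^ (((n : ℝ) - 2) / 4) := by
  have hn3 : (3 : ℝ) ≤ (n : ℝ) := by exact_mod_cast hn
  have hN2 : (0 : ℝ) < (n : ℝ) - 2 := by linarith
  have hN : (0 : ℝ) < (n : ℝ) := by linarith
  have hN2ne : ((n : ℝ) - 2) ≠ 0 := ne_of_gt hN2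
  have hNne : (n : ℝ) ≠ 0 := ne_of_gt hN
  set a : ℝ := ((n : ℝ) - 2) / (n : ℝ) with ha_def
  have ha : 0 < a := div_pos hN2 hN
  -- basic rpow identities
  have e1 : (a ^ (((n : ℝ) - 2) / 4)) ^ (2 : ℕ) = a ^ (((n : ℝ) - 2) / 2) := by
    rw [← Real.rpow_natCast (a ^ (((n : ℝ) - 2) / 4)) 2, ← Real.rpow_mul ha.le]
    norm_num
    congr 1
    ring
  have e2 : (a ^ (((n : ℝ) - 2) / 4)) ^ (2 * (n : ℝ) / ((n : ℝ) - 2))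
      = a ^ (((n : ℝ) - 2) / 2) * a := by
    rw [← Real.rpow_mul ha.le]
    have : ((n : ℝ) - 2) / 4 * (2 * (n : ℝ) / ((n : ℝ) - 2)) = ((n : ℝ) - 2) / 2 + 1 := by
      field_simp; ring
    rw [this, Real.rpow_add ha, Real.rpow_one]
  have e3 : (a ^ (((n : ℝ) - 2) / 4)) ^ (((n : ℝ) + 2) / ((n : ℝ) - 2))
      = a ^ (((n : ℝ) - 2) / 4) * a := by
    rw [← Real.rpow_mul ha.le]
    have : ((n : ℝ) - 2) / 4 * (((n : ℝ) + 2) / ((n : ℝ) - 2)) = ((n : ℝ) - 2) / 4 + 1 := by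
      field_simp; ring
    rw [this, Real.rpow_add ha, Real.rpow_one]
  have e4 : a ^ ((n : ℝ) / 2) = a ^ (((n : ℝ) - 2) / 2) * a := by
    have : (n : ℝ) / 2 = ((n : ℝ) - 2) / 2 + 1 := by ring
    rw [this, Real.rpow_add ha, Real.rpow_one]
  refine ⟨⟨?_, ?_⟩, ?_⟩
  · intro t
    simp only [deriv_const']
    rw [e3, ha_def]
    field_simp
    ring
  · intro t
    simp only [delaunayH, deriv_const']
    rw [e1, e2, e4, ha_def]
    field_simp
    ring
  · intro v _ _ hpos _ hH t
    set q : ℝ := (n : ℝ) / ((n : ℝ) - 2) with hq_def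
    have hq : 1 < q := (one_lt_div hN2).mpr (by linarith)
    set x : ℝ := v t with hx_def
    have hx : 0 < x := hpos t
    set u : ℝ := x ^ (2 : ℕ) with hu_def
    have hu : 0 < u := by positivity
    set u₀ : ℝ := a ^ (((n : ℝ) - 2) / 2) with hu0_def
    have hu0 : 0 < u₀ := Real.rpow_pos_of_pos ha _
    have hxq : x ^ (2 * (n : ℝ) / ((n : ℝ) - 2)) = u ^ q := by
      rw [hu_def, ← Real.rpow_natCast x 2, ← Real.rpow_mul hx.le]
      congr 1
      push_cast
      rw [hq_def]; ring
    have hu0q : u₀ ^ q = u₀ * a := by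
      rw [hu0_def, ← Real.rpow_mul ha.le]
      have : ((n : ℝ) - 2) / 2 * q = ((n : ℝ) - 2) / 2 + 1 := by
        rw [hq_def]; field_simp; ring
      rw [this, Real.rpow_add ha, Real.rpow_one]
    have hcrit : q * u₀ ^ (q - 1) = 1 := by
      rw [hu0_def, ← Real.rpow_mul ha.le]
      have : ((n : ℝ) - 2) / 2 * (q - 1) = 1 := by
        rw [hq_def]; field_simp; ring
      rw [this, Real.rpow_one]
      field_simp [hq_def, ha_def]
      rw [hq_def, ha_def]; field_simp
    -- the energy identity
    have hE := hH t
    simp only [delaunayH] at hE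
    rw [hxq, e4] at hE
    -- deduce u ^ q - u ≤ u₀ ^ q - u₀
    have hw2 : 0 ≤ (deriv v t) ^ 2 := sq_nonneg _
    have hle : u ^ q - u ≤ u₀ ^ q - u₀ := by
      have hc : (0 : ℝ) < ((n : ℝ) - 2) ^ 2 / 4 := by positivity
      have hrhs : (((n : ℝ) - 2) ^ 2 / 4) * (u₀ ^ q - u₀)
          = -(((n : ℝ) - 2) / 2) * (a ^ (((n : ℝ) - 2) / 2) * a) := by
        rw [hu0q, hu0_def, ha_def]
        field_simp
        ring
      nlinarith [hE, hrhs, hw2]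
    -- conclude u = u₀
    have hueq : u = u₀ := by
      by_contra hne
      exact absurd hle (not_le.mpr (bern_min hq hu hu0 hne hcrit))
    -- conclude x = v₀
    have hv0 : (a ^ (((n : ℝ) - 2) / 4)) > 0 := Real.rpow_pos_of_pos ha _
    have hsq : x ^ (2 : ℕ) = (a ^ (((n : ℝ) - 2) / 4)) ^ (2 : ℕ) := by
      rw [← hu_def, hueq, hu0_def, e1]
    have h4 : (x - a ^ (((n : ℝ) - 2) / 4)) * (x + a ^ (((n : ℝ) - 2) / 4)) = 0 := by
      linear_combination hsq
    rcases mul_eq_zero.mp h4 with h | h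
    · rw [hx_def] at h ⊢; linarith
    · linarith
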